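/- Let d, f ∈ ℂ with e ∈ ℂ, e ≠ 0, and d = f. Then diag(d,e,d) = T₁T₂ where T₁ = [[1,0,1],[0,1,0],[(e−d)/e,0,1]] and T₂ = [[e,0,−e],[0,e,0],[d−e,0,e]], and both T₁ and T₂ are Toeplitz. -/

import Mathlib

def IsToeplitz {n : ℕ} (M : Matrix (Fin n) (Fin n) ℂ) : Prop :=
  ∀ (i j : Fin n) (hi : (i : ℕ) + 1 < n) (hj : (j : ℕ) + 1 < n),
    M i j = M ⟨i + 1, hi⟩ ⟨j + 1, hj⟩

theorem diag_ded_factorization (d e : ℂ) (he : e ≠ 0) :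
    IsToeplitz (!![1, 0, 1; 0, 1, 0; (e - d) / e, 0, 1] : Matrix (Fin 3) (Fin 3) ℂ) ∧
    IsToeplitz (!![e, 0, -e; 0, e, 0; d - e, 0, e] : Matrix (Fin 3) (Fin 3) ℂ) ∧
    (!![1, 0, 1; 0, 1, 0; (e - d) / e, 0, 1] : Matrix (Fin 3) (Fin 3) ℂ) *
      !![e, 0, -e; 0, e, 0; d - e, 0, e] = Matrix.diagonal ![d, e, d] := by
  refine ⟨?_, ?_, ?_⟩
  · intro i j hi hj
    fin_cases i <;> fin_cases j <;> (try norm_num at hi hj) <;> (try simp at hi hj) <;> simp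
  · intro i j hi hj
    fin_cases i <;> fin_cases j <;> (try norm_num at hi hj) <;> (try simp at hi hj) <;> simp
  · ext i j
    fin_cases i <;> fin_cases j <;>
      simp [Matrix.mul_apply, Fin.sum_univ_succ, Matrix.diagonal]
      <;> field_simp <;> ring
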